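/- arXiv:2202.01555 — 4 statements merged into one kernel-verified Lean document; each statement's English description precedes it below -/
import Mathlib

section
/- Let (φ_n) be an orthonormal system on [0,1] with ∫_0^1 φ_n(x) dx = 0 for every n ≥ 1, and let (d_k) be a bounded sequence of positive real numbers. Suppose that for every sequence ε = (ε_n) with ε_n ∈ {-1,0,1} there exists a constant M(ε) such that D_N(ε) ≤ M(ε) for all N ≥ 2. Then for every function f ∈ Lip1 on [0,1] the series Σ_{k=1}^∞ |c_k(f)| · k^{1/2} · d_k converges. -/
open MeasureTheory Set Filter

noncomputable section

/-- `φ` is an orthonormal system on `[0,1]` (indexed by `n ≥ 1`). -/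
def IsONS (φ : ℕ → ℝ → ℝ) : Prop :=
  (∀ n, 1 ≤ n → MemLp (φ n) 2 (volume.restrict (Icc (0:ℝ) 1))) ∧
  ∀ n m, 1 ≤ n → 1 ≤ m →
    (∫ x in (0:ℝ)..1, φ n x * φ m x) = if n = m then 1 else 0

/-- `f` belongs to the class Lip 1 on `[0,1]`. -/
def Lip1 (f : ℝ → ℝ) : Prop :=
  ∃ M > (0:ℝ), ∀ x ∈ Icc (0:ℝ) 1, ∀ y ∈ Icc (0:ℝ) 1, |f x - f y| ≤ M * |x - y|

/-- `Q_N(x, ε) = ∑_{k=1}^N d_k k^{1/2} ε_k φ_k(x)`. -/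
def QN (φ : ℕ → ℝ → ℝ) (d ε : ℕ → ℝ) (N : ℕ) (x : ℝ) : ℝ :=
  ∑ k ∈ Finset.Icc 1 N, d k * Real.sqrt k * ε k * φ k x

/-- `D_N(ε) = (1/N) ∑_{i=1}^{N-1} |∫_0^{i/N} Q_N(x, ε) dx|`. -/
def DN (φ : ℕ → ℝ → ℝ) (d ε : ℕ → ℝ) (N : ℕ) : ℝ :=
  (1 / (N:ℝ)) * ∑ i ∈ Finset.Icc 1 (N - 1), |∫ x in (0:ℝ)..((i:ℝ)/(N:ℝ)), QN φ d ε N x|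

-- auxiliary lemmas

lemma aux_ii {g : ℝ → ℝ} (hg : IntegrableOn g (Icc (0:ℝ) 1)) {a b : ℝ}
    (ha : 0 ≤ a) (hab : a ≤ b) (hb : b ≤ 1) : IntervalIntegrable g volume a b := by
  rw [intervalIntegrable_iff_integrableOn_Ioc_of_le hab]
  exact hg.mono_set (Ioc_subset_Icc_self.trans (Icc_subset_Icc ha hb))

lemma aux_mul_int {g h : ℝ → ℝ} (hg : MemLp g 2 (volume.restrict (Icc (0:ℝ) 1)))
    (hh : MemLp h 2 (volume.restrict (Icc (0:ℝ) 1))) :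
    IntegrableOn (fun x => g x * h x) (Icc (0:ℝ) 1) := by
  have := hh.smul hg (p := 2) (q := 2) (r := 1)
  exact memLp_one_iff_integrable.mp this

lemma aux_sign (r : ℝ) : Real.sign r * r = |r| := by
  rcases lt_trichotomy r 0 with h | h | h
  · rw [Real.sign_of_neg h, abs_of_neg h]; ring
  · simp [h]
  · rw [Real.sign_of_pos h, abs_of_pos h]; ring

lemma aux_amgm (t a : ℝ) (ha : 0 < a) : |t| ≤ (a + t * t / a) / 2 := by
  have key : 2 * a * |t| ≤ a ^ 2 + t * t := by
    nlinarith [sq_nonneg (|t| - a), sq_abs t]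
  rw [← sub_nonneg]
  have heq : (a + t * t / a) / 2 - |t| = (a ^ 2 + t * t - 2 * a * |t|) / (2 * a) := by
    field_simp
  rw [heq]
  exact div_nonneg (by linarith) (by linarith)

theorem statement0 (φ : ℕ → ℝ → ℝ) (hONS : IsONS φ)
    (hzero : ∀ n, 1 ≤ n → (∫ x in (0:ℝ)..1, φ n x) = 0)
    (d : ℕ → ℝ) (hdpos : ∀ k, 0 < d k) (hdbd : ∃ C : ℝ, ∀ k, d k ≤ C)
    (hD : ∀ ε : ℕ → ℝ, (∀ n, ε n = -1 ∨ ε n = 0 ∨ ε n = 1) →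
      ∃ M : ℝ, ∀ N, 2 ≤ N → DN φ d ε N ≤ M)
    (f : ℝ → ℝ) (hf : Lip1 f) :
    Summable (fun k : ℕ =>
      |∫ x in (0:ℝ)..1, f x * φ (k + 1) x| * Real.sqrt ((k:ℝ) + 1) * d (k + 1)) := by
  obtain ⟨hmem, horth⟩ := hONS
  obtain ⟨M, hM, hlip⟩ := hf
  obtain ⟨C0, hC0⟩ := hdbd
  set C : ℝ := max C0 1 with hCdef
  have hC1 : (1:ℝ) ≤ C := le_max_right _ _
  have hCpos : (0:ℝ) < C := lt_of_lt_of_le one_pos hC1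
  have hdC : ∀ k, d k ≤ C := fun k => (hC0 k).trans (le_max_left _ _)
  set c : ℕ → ℝ := fun k => ∫ x in (0:ℝ)..1, f x * φ k x with hcdef
  set ε : ℕ → ℝ := fun k => Real.sign (c k) with hεdef
  have hεval : ∀ n, ε n = -1 ∨ ε n = 0 ∨ ε n = 1 := fun n => Real.sign_apply_eq (c n)
  obtain ⟨Mε, hMε⟩ := hD ε hεval
  set a : ℕ → ℝ := fun k => d k * Real.sqrt k * ε k with hadef
  -- f facts
  have hfcont : ContinuousOn f (Icc (0:ℝ) 1) := by
    have : LipschitzOnWith M.toNNReal f (Icc (0:ℝ) 1) := by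
      rw [lipschitzOnWith_iff_dist_le_mul]
      intro x hx y hy
      rw [Real.dist_eq, Real.dist_eq]
      simpa [Real.coe_toNNReal M hM.le] using hlip x hx y hy
    exact this.continuousOn
  have hfmeas : AEStronglyMeasurable f (volume.restrict (Icc (0:ℝ) 1)) :=
    hfcont.aestronglyMeasurable measurableSet_Icc
  have hfbd : ∀ x ∈ Icc (0:ℝ) 1, |f x| ≤ |f 0| + M := by
    intro x hx
    have h1 := hlip x hx 0 (by constructor <;> norm_num)
    have : |x - 0| ≤ 1 := by rw [sub_zero, abs_of_nonneg hx.1]; exact hx.2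
    calc |f x| ≤ |f x - f 0| + |f 0| := by
          have := abs_add_le (f x - f 0) (f 0); simpa using this
      _ ≤ M * |x - 0| + |f 0| := by linarith
      _ ≤ |f 0| + M := by nlinarith
  have hfmul : ∀ {g : ℝ → ℝ}, IntegrableOn g (Icc (0:ℝ) 1) →
      IntegrableOn (fun x => f x * g x) (Icc (0:ℝ) 1) := by
    intro g hg
    apply hg.bdd_mul (c := |f 0| + M) hfmeas
    exact (ae_restrict_iff' measurableSet_Icc).mpr (ae_of_all _ (fun x hx => by
      simpa [Real.norm_eq_abs] using hfbd x hx))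
  -- key bound on partial sums
  have key : ∀ N, 2 ≤ N →
      ∑ k ∈ Finset.Icc 1 N, |c k| * Real.sqrt k * d k ≤ M * C + M * Mε := by
    intro N hN
    have hN0 : (0:ℝ) < N := by exact_mod_cast Nat.pos_of_ne_zero (by omega)
    have haux : ∀ k ∈ Finset.Icc 1 N, 1 ≤ k := fun k hk => (Finset.mem_Icc.mp hk).1
    -- integrability of Q
    have hQmem : MemLp (QN φ d ε N) 2 (volume.restrict (Icc (0:ℝ) 1)) := by
      have : QN φ d ε N = fun x => ∑ k ∈ Finset.Icc 1 N,
          (d k * Real.sqrt k * ε k) * φ k x := rfl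
      rw [this]
      exact memLp_finset_sum _ (fun k hk => (hmem k (haux k hk)).const_mul _)
    have hQint : IntegrableOn (QN φ d ε N) (Icc (0:ℝ) 1) := hQmem.integrable one_le_two
    have hQsq : IntegrableOn (fun x => QN φ d ε N x * QN φ d ε N x) (Icc (0:ℝ) 1) :=
      aux_mul_int hQmem hQmem
    have hfQ : IntegrableOn (fun x => f x * QN φ d ε N x) (Icc (0:ℝ) 1) := hfmul hQint
    -- grid facts
    have hu01 : ∀ i : ℕ, i ≤ N → (i:ℝ)/N ∈ Icc (0:ℝ) 1 := by
      intro i hi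
      constructor
      · positivity
      · rw [div_le_one hN0]; exact_mod_cast hi
    have hustep : ∀ i : ℕ, (i:ℝ)/N ≤ ((i+1:ℕ):ℝ)/N := by
      intro i
      rw [div_le_div_iff_of_pos_right hN0]
      push_cast; linarith
    have hφint : ∀ k, 1 ≤ k → IntegrableOn (φ k) (Icc (0:ℝ) 1) :=
      fun k hk => (hmem k hk).integrable one_le_two
    have hbQ : ∀ b : ℝ, IntegrableOn (fun x => (f x - b) * QN φ d ε N x) (Icc (0:ℝ) 1) := by
      intro b
      have : (fun x => (f x - b) * QN φ d ε N x)
          = fun x => f x * QN φ d ε N x - b * QN φ d ε N x := funext fun x => by ring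
      rw [this]
      exact hfQ.sub (hQint.const_mul b)
    -- expansion of ∫ f·Q
    have hexp : (∫ x in (0:ℝ)..1, f x * QN φ d ε N x)
        = ∑ k ∈ Finset.Icc 1 N, (d k * Real.sqrt k * ε k) * c k := by
      have h1 : EqOn (fun x => f x * QN φ d ε N x)
          (fun x => ∑ k ∈ Finset.Icc 1 N, (d k * Real.sqrt k * ε k) * (f x * φ k x))
          (uIcc (0:ℝ) 1) := by
        intro x _
        simp only [QN, Finset.mul_sum]
        exact Finset.sum_congr rfl (fun k _ => by ring)
      rw [intervalIntegral.integral_congr h1,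
        intervalIntegral.integral_finset_sum (fun k hk =>
          ((aux_ii (hfmul (hφint k (haux k hk))) le_rfl zero_le_one le_rfl).const_mul _))]
      exact Finset.sum_congr rfl (fun k hk => intervalIntegral.integral_const_mul _ _)
    have hS : ∑ k ∈ Finset.Icc 1 N, |c k| * Real.sqrt k * d k
        = ∫ x in (0:ℝ)..1, f x * QN φ d ε N x := by
      rw [hexp]
      refine Finset.sum_congr rfl (fun k hk => ?_)
      have h1 : d k * Real.sqrt k * ε k * c k
          = d k * Real.sqrt k * (Real.sign (c k) * c k) := by rw [hεdef]; ring
      rw [h1, aux_sign]; ring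
    -- L² norm of Q
    have hQsqval : (∫ x in (0:ℝ)..1, QN φ d ε N x * QN φ d ε N x)
        = ∑ k ∈ Finset.Icc 1 N, (d k * Real.sqrt k * ε k)^2 := by
      have h1 : EqOn (fun x => QN φ d ε N x * QN φ d ε N x)
          (fun x => ∑ k ∈ Finset.Icc 1 N, ∑ j ∈ Finset.Icc 1 N,
            (d k * Real.sqrt k * ε k) * (d j * Real.sqrt j * ε j) * (φ k x * φ j x))
          (uIcc (0:ℝ) 1) := by
        intro x _
        simp only [QN, Finset.sum_mul_sum]
        exact Finset.sum_congr rfl fun k _ => Finset.sum_congr rfl fun j _ => by ring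
      have hint2 : ∀ k ∈ Finset.Icc 1 N, ∀ j ∈ Finset.Icc 1 N,
          IntervalIntegrable (fun x => (d k * Real.sqrt k * ε k) * (d j * Real.sqrt j * ε j)
            * (φ k x * φ j x)) volume 0 1 := by
        intro k hk j hj
        exact (aux_ii (aux_mul_int (hmem k (haux k hk)) (hmem j (haux j hj)))
          le_rfl zero_le_one le_rfl).const_mul _
      have houter : ∀ k ∈ Finset.Icc 1 N, IntervalIntegrable
          (fun x => ∑ j ∈ Finset.Icc 1 N,
            (d k * Real.sqrt k * ε k) * (d j * Real.sqrt j * ε j) * (φ k x * φ j x))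
          volume 0 1 := by
        intro k hk
        have h3 := IntervalIntegrable.sum (μ := volume) (a := (0:ℝ)) (b := 1)
          (Finset.Icc 1 N)
          (f := fun j x => (d k * Real.sqrt k * ε k) * (d j * Real.sqrt j * ε j)
            * (φ k x * φ j x)) (fun j hj => hint2 k hk j hj)
        simpa only [Finset.sum_fn] using h3
      rw [intervalIntegral.integral_congr h1,
        intervalIntegral.integral_finset_sum houter]
      refine Finset.sum_congr rfl (fun k hk => ?_)
      rw [intervalIntegral.integral_finset_sum (fun j hj => hint2 k hk j hj)]
      have h2 : ∀ j ∈ Finset.Icc 1 N,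
          (∫ x in (0:ℝ)..1, (d k * Real.sqrt k * ε k) * (d j * Real.sqrt j * ε j)
            * (φ k x * φ j x))
          = if k = j then (d k * Real.sqrt k * ε k) * (d j * Real.sqrt j * ε j) else 0 := by
        intro j hj
        rw [intervalIntegral.integral_const_mul, horth k j (haux k hk) (haux j hj)]
        split <;> simp
      rw [Finset.sum_congr rfl h2, Finset.sum_ite_eq (Finset.Icc 1 N) k
        (fun j => (d k * Real.sqrt k * ε k) * (d j * Real.sqrt j * ε j)), if_pos hk]
      ring
    have hQsqbd : (∫ x in (0:ℝ)..1, QN φ d ε N x * QN φ d ε N x) ≤ (C*N)^2 := by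
      rw [hQsqval]
      have hbound : ∀ k ∈ Finset.Icc 1 N, (d k * Real.sqrt k * ε k)^2 ≤ C^2 * N := by
        intro k hk
        obtain ⟨hk1, hkN⟩ := Finset.mem_Icc.mp hk
        have h1 : (Real.sqrt k)^2 = (k:ℝ) := Real.sq_sqrt (by positivity)
        have h2 : (ε k)^2 ≤ 1 := by rcases hεval k with h|h|h <;> rw [h] <;> norm_num
        have h3 : (d k)^2 ≤ C^2 := by nlinarith [hdpos k, hdC k]
        have h4 : (k:ℝ) ≤ N := by exact_mod_cast hkN
        have h5 : (0:ℝ) ≤ k := by positivity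
        calc (d k * Real.sqrt k * ε k)^2 = (d k)^2 * (Real.sqrt k)^2 * (ε k)^2 := by ring
          _ ≤ C^2 * N := by
              rw [h1]
              have e1 : (d k)^2 * (k:ℝ) * (ε k)^2 ≤ (d k)^2 * (k:ℝ) * 1 :=
                mul_le_mul_of_nonneg_left h2 (by positivity)
              have e2 : (d k)^2 * (k:ℝ) ≤ C^2 * (N:ℝ) :=
                mul_le_mul h3 h4 h5 (sq_nonneg C)
              linarith
      calc ∑ k ∈ Finset.Icc 1 N, (d k * Real.sqrt k * ε k)^2
          ≤ ∑ _k ∈ Finset.Icc 1 N, C^2 * N := Finset.sum_le_sum hbound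
        _ = (N : ℝ) * (C^2 * N) := by
            rw [Finset.sum_const, Nat.card_Icc, nsmul_eq_mul]
            norm_num
        _ = (C*N)^2 := by ring
    have hQL1 : (∫ x in (0:ℝ)..1, |QN φ d ε N x|) ≤ C * N := by
      have hCN : (0:ℝ) < C * N := by positivity
      have hmono : (∫ x in (0:ℝ)..1, |QN φ d ε N x|)
          ≤ ∫ x in (0:ℝ)..1, (C*N/2 + (1/(2*(C*N))) * (QN φ d ε N x * QN φ d ε N x)) := by
        apply intervalIntegral.integral_mono_on zero_le_one
          (aux_ii hQint.abs le_rfl zero_le_one le_rfl)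
          (intervalIntegrable_const.add
            ((aux_ii hQsq le_rfl zero_le_one le_rfl).const_mul _))
        intro x _
        have h1 := aux_amgm (QN φ d ε N x) (C*N) hCN
        calc |QN φ d ε N x| ≤ (C*N + QN φ d ε N x * QN φ d ε N x/(C*N))/2 := h1
          _ = C*N/2 + (1/(2*(C*N))) * (QN φ d ε N x * QN φ d ε N x) := by
              field_simp
      rw [intervalIntegral.integral_add intervalIntegrable_const
        ((aux_ii hQsq le_rfl zero_le_one le_rfl).const_mul _),
        intervalIntegral.integral_const, intervalIntegral.integral_const_mul] at hmono
      have h2 : (1/(2*(C*N))) * (∫ x in (0:ℝ)..1, QN φ d ε N x * QN φ d ε N x)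
          ≤ (1/(2*(C*N))) * (C*N)^2 :=
        mul_le_mul_of_nonneg_left hQsqbd (by positivity)
      have h3 : ((1:ℝ) - 0) • (C*N/2) = C*N/2 := by norm_num
      rw [h3] at hmono
      have h4 : C*N/2 + (1/(2*(C*N))) * (C*N)^2 = C*N := by field_simp; ring
      linarith
    -- partition and per-interval bounds
    have hiint : ∀ (g : ℝ → ℝ), IntegrableOn g (Icc (0:ℝ) 1) → ∀ i : ℕ, i < N →
        IntervalIntegrable g volume ((i:ℝ)/N) (((i+1:ℕ):ℝ)/N) := by
      intro g hg i hi
      exact aux_ii hg (hu01 i hi.le).1 (hustep i) (hu01 (i+1) hi).2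
    have hpart : (∫ x in (0:ℝ)..1, f x * QN φ d ε N x)
        = ∑ i ∈ Finset.range N, ∫ x in ((i:ℝ)/N)..(((i+1:ℕ):ℝ)/N), f x * QN φ d ε N x := by
      rw [intervalIntegral.sum_integral_adjacent_intervals
        (a := fun i => (i:ℝ)/N) (fun i hi => hiint _ hfQ i hi)]
      norm_num
      rw [div_self (ne_of_gt hN0)]
    -- the antiderivative-values sequence g
    obtain ⟨g, hg⟩ : ∃ g : ℕ → ℝ, ∀ i : ℕ,
        g i = ∫ x in (0:ℝ)..((i:ℝ)/N), QN φ d ε N x := ⟨_, fun i => rfl⟩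
    have hgadj : ∀ i : ℕ, i < N →
        (∫ x in ((i:ℝ)/N)..(((i+1:ℕ):ℝ)/N), QN φ d ε N x) = g (i+1) - g i := by
      intro i hi
      have h0 := intervalIntegral.integral_add_adjacent_intervals
        (a := (0:ℝ)) (b := (i:ℝ)/N) (c := ((i+1:ℕ):ℝ)/N)
        (aux_ii hQint le_rfl (hu01 i hi.le).1 (hu01 i hi.le).2)
        (hiint _ hQint i hi)
      rw [hg i, hg (i+1)]
      linarith
    have hsplit : ∀ i : ℕ, i < N →
        (∫ x in ((i:ℝ)/N)..(((i+1:ℕ):ℝ)/N), f x * QN φ d ε N x)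
        = (∫ x in ((i:ℝ)/N)..(((i+1:ℕ):ℝ)/N), (f x - f ((i:ℝ)/N)) * QN φ d ε N x)
          + f ((i:ℝ)/N) * (g (i+1) - g i) := by
      intro i hi
      rw [← hgadj i hi, ← intervalIntegral.integral_const_mul,
        ← intervalIntegral.integral_add (hiint _ (hbQ _) i hi)
          ((hiint _ hQint i hi).const_mul _)]
      apply intervalIntegral.integral_congr
      intro x _
      simp only
      ring
    have hAi : ∀ i : ℕ, i < N →
        (∫ x in ((i:ℝ)/N)..(((i+1:ℕ):ℝ)/N), (f x - f ((i:ℝ)/N)) * QN φ d ε N x)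
        ≤ (M/N) * ∫ x in ((i:ℝ)/N)..(((i+1:ℕ):ℝ)/N), |QN φ d ε N x| := by
      intro i hi
      refine (le_abs_self _).trans ?_
      refine (intervalIntegral.abs_integral_le_integral_abs (hustep i)).trans ?_
      rw [← intervalIntegral.integral_const_mul]
      apply intervalIntegral.integral_mono_on (hustep i)
        ((hiint _ (hbQ _) i hi).abs) ((hiint _ hQint.abs i hi).const_mul _)
      intro x hx
      have hxIcc : x ∈ Icc (0:ℝ) 1 :=
        ⟨le_trans (hu01 i hi.le).1 hx.1, le_trans hx.2 (hu01 (i+1) hi).2⟩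
      have hflip := hlip x hxIcc ((i:ℝ)/N) (hu01 i hi.le)
      have hstep1 : ((i+1:ℕ):ℝ)/N = (i:ℝ)/N + 1/N := by push_cast; ring
      have hxd : |x - (i:ℝ)/N| ≤ 1/N := by
        rw [abs_of_nonneg (by linarith [hx.1])]
        have := hx.2
        rw [hstep1] at this
        linarith
      calc |(f x - f ((i:ℝ)/N)) * QN φ d ε N x|
          = |f x - f ((i:ℝ)/N)| * |QN φ d ε N x| := abs_mul _ _
        _ ≤ (M/N) * |QN φ d ε N x| := by
            apply mul_le_mul ?_ le_rfl (abs_nonneg _) (by positivity)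
            refine hflip.trans ?_
            rw [div_eq_mul_one_div M (N:ℝ)]
            exact mul_le_mul_of_nonneg_left hxd hM.le
    have hAsum : ∑ i ∈ Finset.range N,
        (M/N) * ∫ x in ((i:ℝ)/N)..(((i+1:ℕ):ℝ)/N), |QN φ d ε N x| ≤ M * C := by
      rw [← Finset.mul_sum]
      have hsum : ∑ i ∈ Finset.range N, ∫ x in ((i:ℝ)/N)..(((i+1:ℕ):ℝ)/N), |QN φ d ε N x|
          = ∫ x in (0:ℝ)..1, |QN φ d ε N x| := by
        rw [intervalIntegral.sum_integral_adjacent_intervals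
          (a := fun i => (i:ℝ)/N) (fun i hi => hiint _ hQint.abs i hi)]
        norm_num
        rw [div_self (ne_of_gt hN0)]
      rw [hsum]
      calc (M/N) * ∫ x in (0:ℝ)..1, |QN φ d ε N x|
          ≤ (M/N) * (C*N) := mul_le_mul_of_nonneg_left hQL1 (by positivity)
        _ = M * C := by field_simp
    have hgN : g N = 0 := by
      rw [hg N, div_self (ne_of_gt hN0)]
      have h1 : EqOn (QN φ d ε N)
          (fun x => ∑ k ∈ Finset.Icc 1 N, (d k * Real.sqrt k * ε k) * φ k x)
          (uIcc (0:ℝ) 1) := fun x _ => rfl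
      rw [intervalIntegral.integral_congr h1,
        intervalIntegral.integral_finset_sum (fun k hk =>
          (aux_ii (hφint k (haux k hk)) le_rfl zero_le_one le_rfl).const_mul _)]
      refine Finset.sum_eq_zero fun k hk => ?_
      rw [intervalIntegral.integral_const_mul, hzero k (haux k hk), mul_zero]
    have hg0 : g 0 = 0 := by
      rw [hg 0]
      norm_num
    have hDN : ∑ j ∈ Finset.Icc 1 (N-1), |g j| = N * DN φ d ε N := by
      have h1 : DN φ d ε N = (1/N) * ∑ j ∈ Finset.Icc 1 (N-1), |g j| := by
        unfold DN
        congr 1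
        exact Finset.sum_congr rfl fun i _ => by rw [hg]
      rw [h1]
      field_simp
    have hT : ∑ i ∈ Finset.range N, f ((i:ℝ)/N) * (g (i+1) - g i) ≤ M * Mε := by
      have htel : ∑ i ∈ Finset.range N,
          (f (((i+1:ℕ):ℝ)/N) * g (i+1) - f ((i:ℝ)/N) * g i)
          = f (((N:ℕ):ℝ)/N) * g N - f (((0:ℕ):ℝ)/N) * g 0 :=
        Finset.sum_range_sub (fun i => f ((i:ℝ)/N) * g i) N
      have hrw : ∑ i ∈ Finset.range N, f ((i:ℝ)/N) * (g (i+1) - g i)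
          = ∑ i ∈ Finset.range N, (f ((i:ℝ)/N) - f (((i+1:ℕ):ℝ)/N)) * g (i+1) := by
        have h2 : ∀ i ∈ Finset.range N, f ((i:ℝ)/N) * (g (i+1) - g i)
            = (f ((i:ℝ)/N) - f (((i+1:ℕ):ℝ)/N)) * g (i+1)
              + (f (((i+1:ℕ):ℝ)/N) * g (i+1) - f ((i:ℝ)/N) * g i) :=
          fun i _ => by ring
        rw [Finset.sum_congr rfl h2, Finset.sum_add_distrib, htel, hgN, hg0]
        ring
      rw [hrw]
      have hb : ∀ i : ℕ, i < N →
          |f ((i:ℝ)/N) - f (((i+1:ℕ):ℝ)/N)| ≤ M/N := by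
        intro i hi
        have h1 := hlip ((i:ℝ)/N) (hu01 i hi.le) (((i+1:ℕ):ℝ)/N) (hu01 (i+1) hi)
        have h2 : |(i:ℝ)/N - ((i+1:ℕ):ℝ)/N| = 1/N := by
          rw [show (i:ℝ)/N - ((i+1:ℕ):ℝ)/N = -(1/N) by push_cast; field_simp; ring,
            abs_neg, abs_of_nonneg (by positivity)]
        rw [h2] at h1
        refine h1.trans ?_
        rw [div_eq_mul_one_div M (N:ℝ)]
      calc ∑ i ∈ Finset.range N, (f ((i:ℝ)/N) - f (((i+1:ℕ):ℝ)/N)) * g (i+1)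
          ≤ |∑ i ∈ Finset.range N, (f ((i:ℝ)/N) - f (((i+1:ℕ):ℝ)/N)) * g (i+1)| :=
            le_abs_self _
        _ ≤ ∑ i ∈ Finset.range N, |(f ((i:ℝ)/N) - f (((i+1:ℕ):ℝ)/N)) * g (i+1)| :=
            Finset.abs_sum_le_sum_abs _ _
        _ ≤ ∑ i ∈ Finset.range N, (M/N) * |g (i+1)| := by
            refine Finset.sum_le_sum fun i hi => ?_
            rw [abs_mul]
            exact mul_le_mul (hb i (Finset.mem_range.mp hi)) le_rfl (abs_nonneg _)
              (by positivity)
        _ = (M/N) * ∑ i ∈ Finset.range N, |g (i+1)| := by rw [Finset.mul_sum]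
        _ ≤ M * Mε := by
            have hre : ∑ i ∈ Finset.range N, |g (i+1)| = ∑ j ∈ Finset.Icc 1 N, |g j| := by
              rw [← Finset.Ico_add_one_right_eq_Icc, Finset.sum_Ico_eq_sum_range]
              have hN1 : N + 1 - 1 = N := by omega
              rw [hN1]
              exact Finset.sum_congr rfl fun i _ => by rw [add_comm]
            have hsplit2 : ∑ j ∈ Finset.Icc 1 N, |g j|
                = ∑ j ∈ Finset.Icc 1 (N-1), |g j| + |g N| := by
              have hN1 : N - 1 + 1 = N := by omega
              rw [← hN1, Finset.sum_Icc_succ_top (by omega), hN1]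
            rw [hre, hsplit2, hgN, abs_zero, add_zero, hDN]
            have hDle : DN φ d ε N ≤ Mε := hMε N hN
            calc (M/N) * ((N:ℝ) * DN φ d ε N) = M * DN φ d ε N := by field_simp
              _ ≤ M * Mε := mul_le_mul_of_nonneg_left hDle hM.le
    calc ∑ k ∈ Finset.Icc 1 N, |c k| * Real.sqrt k * d k
        = ∫ x in (0:ℝ)..1, f x * QN φ d ε N x := hS
      _ = ∑ i ∈ Finset.range N, ∫ x in ((i:ℝ)/N)..(((i+1:ℕ):ℝ)/N), f x * QN φ d ε N x := hpart
      _ = (∑ i ∈ Finset.range N,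
            ∫ x in ((i:ℝ)/N)..(((i+1:ℕ):ℝ)/N), (f x - f ((i:ℝ)/N)) * QN φ d ε N x)
          + ∑ i ∈ Finset.range N, f ((i:ℝ)/N) * (g (i+1) - g i) := by
          rw [← Finset.sum_add_distrib]
          exact Finset.sum_congr rfl (fun i hi => hsplit i (Finset.mem_range.mp hi))
      _ ≤ M * C + M * Mε := by
          refine add_le_add ?_ hT
          calc ∑ i ∈ Finset.range N,
              ∫ x in ((i:ℝ)/N)..(((i+1:ℕ):ℝ)/N), (f x - f ((i:ℝ)/N)) * QN φ d ε N x
              ≤ ∑ i ∈ Finset.range N,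
                (M/N) * ∫ x in ((i:ℝ)/N)..(((i+1:ℕ):ℝ)/N), |QN φ d ε N x| :=
              Finset.sum_le_sum (fun i hi => hAi i (Finset.mem_range.mp hi))
            _ ≤ M * C := hAsum
  -- conclude summability
  have hterm : ∀ k : ℕ,
      |∫ x in (0:ℝ)..1, f x * φ (k + 1) x| * Real.sqrt ((k:ℝ) + 1) * d (k + 1)
        = |c (k + 1)| * Real.sqrt ((k+1 : ℕ)) * d (k + 1) := by
    intro k; push_cast; rfl
  apply summable_of_sum_range_le (c := M * C + M * Mε)
  · intro n
    rw [hterm n]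
    have := (hdpos (n+1)).le
    positivity
  · intro n
    calc ∑ k ∈ Finset.range n,
          |∫ x in (0:ℝ)..1, f x * φ (k + 1) x| * Real.sqrt ((k:ℝ) + 1) * d (k + 1)
        ≤ ∑ k ∈ Finset.range (n + 2),
          |∫ x in (0:ℝ)..1, f x * φ (k + 1) x| * Real.sqrt ((k:ℝ) + 1) * d (k + 1) := by
          apply Finset.sum_le_sum_of_subset_of_nonneg
          · exact Finset.range_subset_range.mpr (by omega)
          · intro k _ _
            rw [hterm k]
            have := (hdpos (k+1)).le
            positivity
      _ = ∑ k ∈ Finset.Icc 1 (n + 2), |c k| * Real.sqrt k * d k := by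
          rw [← Finset.Ico_add_one_right_eq_Icc, Finset.sum_Ico_eq_sum_range]
          have h32 : n + 2 + 1 - 1 = n + 2 := by omega
          rw [h32]
          apply Finset.sum_congr rfl
          intro k _
          rw [add_comm 1 k, hterm k]
      _ ≤ M * C + M * Mε := key (n + 2) (by omega)
end
end

section
/- Let Q ∈ L²(0,1) and let n ≥ 2 be an integer. Let E_n be the set of indices i ∈ {1,…,n−1} for which there exists t ∈ [(i−1)/n, i/n] with sign(∫_0^t Q(x) dx) ≠ sign(∫_0^{i/n} Q(x) dx). Then Σ_{i∈E_n} |∫_0^{i/n} Q(x) dx| ≤ (∫_0^1 Q(x)² dx)^{1/2}. -/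
open MeasureTheory Set Filter

noncomputable section

private lemma abs_le_abs_sub_of_sign_ne {a c : ℝ} (h : Real.sign a ≠ Real.sign c) :
    |c| ≤ |c - a| := by
  rcases lt_trichotomy c 0 with hc | hc | hc
  · have ha : 0 ≤ a := by
      by_contra ha; push_neg at ha
      exact h (by rw [Real.sign_of_neg ha, Real.sign_of_neg hc])
    rw [abs_of_neg hc, abs_of_nonpos (by linarith)]; linarith
  · simp [hc]
  · have ha : a ≤ 0 := by
      by_contra ha; push_neg at ha
      exact h (by rw [Real.sign_of_pos ha, Real.sign_of_pos hc])
    rw [abs_of_pos hc, abs_of_nonneg (by linarith)]; linarith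

private lemma cs_interval {Q : ℝ → ℝ} {t s : ℝ} (hts : t ≤ s)
    (h2 : MemLp Q 2 (volume.restrict (Ioc t s))) :
    |∫ x in t..s, Q x| ≤ Real.sqrt (s - t) * Real.sqrt (∫ x in t..s, Q x ^ 2) := by
  set μ := volume.restrict (Ioc t s) with hμ
  haveI hfin : IsFiniteMeasure μ := by
    constructor
    rw [hμ, Measure.restrict_apply_univ]
    exact measure_Ioc_lt_top
  have habs : MemLp (fun x => |Q x|) (ENNReal.ofReal 2) μ := by
    rw [show ENNReal.ofReal 2 = 2 by norm_num]
    simpa [Real.norm_eq_abs] using h2.norm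
  have hone : MemLp (fun _ : ℝ => (1 : ℝ)) (ENNReal.ofReal 2) μ := memLp_const 1
  have hpq : Real.HolderConjugate 2 2 := Real.HolderConjugate.two_two
  have hH := integral_mul_le_Lp_mul_Lq_of_nonneg hpq
      (Filter.Eventually.of_forall fun x => abs_nonneg _)
      (Filter.Eventually.of_forall fun x => zero_le_one) habs hone
  have hrw1 : ∀ x : ℝ, |Q x| ^ (2 : ℝ) = Q x ^ 2 := fun x => by
    rw [show (2 : ℝ) = ((2 : ℕ) : ℝ) by norm_num, Real.rpow_natCast, sq_abs]
  have hμuniv : (μ Set.univ).toReal = s - t := by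
    rw [hμ, Measure.restrict_apply_univ, Real.volume_Ioc, ENNReal.toReal_ofReal (by linarith)]
  have hH' : ∫ x, |Q x| ∂μ ≤
      Real.sqrt (∫ x, Q x ^ 2 ∂μ) * Real.sqrt (s - t) := by
    have e1 : ∫ x, |Q x| * 1 ∂μ = ∫ x, |Q x| ∂μ := by simp
    have e2 : ∫ x, |Q x| ^ (2 : ℝ) ∂μ = ∫ x, Q x ^ 2 ∂μ := by
      simp only [hrw1]
    have e3 : ∫ x, (1 : ℝ) ^ (2 : ℝ) ∂μ = s - t := by
      simp [Real.one_rpow, Measure.real, hμuniv]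
    rw [e1, e2, e3] at hH
    calc ∫ x, |Q x| ∂μ ≤ (∫ x, Q x ^ 2 ∂μ) ^ (1 / 2 : ℝ) * (s - t) ^ (1 / 2 : ℝ) := hH
      _ = Real.sqrt (∫ x, Q x ^ 2 ∂μ) * Real.sqrt (s - t) := by
          rw [Real.sqrt_eq_rpow, Real.sqrt_eq_rpow]
  have hi1 : ∫ x in t..s, Q x = ∫ x in Ioc t s, Q x := intervalIntegral.integral_of_le hts
  have hi2 : ∫ x in t..s, Q x ^ 2 = ∫ x in Ioc t s, Q x ^ 2 := intervalIntegral.integral_of_le hts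
  calc |∫ x in t..s, Q x| = |∫ x, Q x ∂μ| := by rw [hi1]
    _ ≤ ∫ x, |Q x| ∂μ := by
        simpa [Real.norm_eq_abs] using norm_integral_le_integral_norm (μ := μ) Q
    _ ≤ Real.sqrt (∫ x, Q x ^ 2 ∂μ) * Real.sqrt (s - t) := hH'
    _ = Real.sqrt (s - t) * Real.sqrt (∫ x in t..s, Q x ^ 2) := by rw [hi2, mul_comm]

open scoped Classical in
theorem statement4 (Q : ℝ → ℝ)
    (hQ : MemLp Q 2 (volume.restrict (Icc (0:ℝ) 1)))
    (n : ℕ) (hn : 2 ≤ n) :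
    ∑ i ∈ (Finset.Icc 1 (n - 1)).filter (fun i =>
        ∃ t ∈ Icc (((i:ℝ) - 1) / (n:ℝ)) ((i:ℝ) / (n:ℝ)),
          Real.sign (∫ x in (0:ℝ)..t, Q x) ≠
            Real.sign (∫ x in (0:ℝ)..((i:ℝ) / (n:ℝ)), Q x)),
      |∫ x in (0:ℝ)..((i:ℝ) / (n:ℝ)), Q x| ≤
      Real.sqrt (∫ x in (0:ℝ)..1, (Q x) ^ 2) := by
  have hn0 : (0 : ℝ) < n := by positivity
  have hnne : (n : ℝ) ≠ 0 := ne_of_gt hn0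
  -- integrability of Q and Q² on [0,1]
  have hIntQ : IntegrableOn Q (Icc (0:ℝ) 1) volume := hQ.integrable (by norm_num)
  have hIntQ2 : IntegrableOn (fun x => Q x ^ 2) (Icc (0:ℝ) 1) volume := hQ.integrable_sq
  have hIIQ : ∀ u v : ℝ, u ∈ Icc (0:ℝ) 1 → v ∈ Icc (0:ℝ) 1 →
      IntervalIntegrable Q volume u v := fun u v hu hv =>
    (hIntQ.mono_set (Set.uIcc_subset_Icc hu hv)).intervalIntegrable
  have hIIQ2 : ∀ u v : ℝ, u ∈ Icc (0:ℝ) 1 → v ∈ Icc (0:ℝ) 1 →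
      IntervalIntegrable (fun x => Q x ^ 2) volume u v := fun u v hu hv =>
    (hIntQ2.mono_set (Set.uIcc_subset_Icc hu hv)).intervalIntegrable
  set E := (Finset.Icc 1 (n - 1)).filter (fun i =>
        ∃ t ∈ Icc (((i:ℝ) - 1) / (n:ℝ)) ((i:ℝ) / (n:ℝ)),
          Real.sign (∫ x in (0:ℝ)..t, Q x) ≠
            Real.sign (∫ x in (0:ℝ)..((i:ℝ) / (n:ℝ)), Q x)) with hE
  set b : ℝ → ℝ := fun i => ∫ x in ((i - 1) / (n:ℝ))..(i / (n:ℝ)), Q x ^ 2 with hb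
  set I := ∫ x in (0:ℝ)..1, (Q x) ^ 2 with hIdef
  set N : Finset ℝ := Finset.image (fun a : ℕ => (a:ℝ)) (Finset.Icc 1 (n-1)) with hN
  have hEN : E ⊆ N := by
    intro i hi
    rw [hE, Finset.mem_filter] at hi
    have h1 := hi.1
    simp only [Finset.pure_def, Finset.bind_def, Finset.sup_singleton_apply, Finset.mem_image,
      Finset.mem_Icc] at h1
    rw [hN, Finset.mem_image]
    obtain ⟨a, ha, rfl⟩ := h1
    exact ⟨a, Finset.mem_Icc.mpr ha, rfl⟩
  have hmem : ∀ i ∈ N, (1:ℝ) ≤ i ∧ i ≤ (n:ℝ) - 1 := by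
    intro i hi
    rw [hN, Finset.mem_image] at hi
    obtain ⟨a, ha, rfl⟩ := hi
    rw [Finset.mem_Icc] at ha
    constructor
    · exact_mod_cast ha.1
    · have : a + 1 ≤ n := by omega
      have : ((a:ℝ) + 1) ≤ (n:ℝ) := by exact_mod_cast this
      linarith
  have hbnonneg : ∀ i : ℝ, 1 ≤ i → 0 ≤ b i := by
    intro i hi
    apply intervalIntegral.integral_nonneg
    · gcongr; linarith
    · intro x _; positivity
  -- Step A: per-term bound
  have stepA : ∀ i ∈ E, |∫ x in (0:ℝ)..(i / (n:ℝ)), Q x| ≤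
      Real.sqrt (1 / n) * Real.sqrt (b i) := by
    intro i hi
    obtain ⟨hi1, hi2⟩ := hmem i (hEN hi)
    rw [hE, Finset.mem_filter] at hi
    obtain ⟨-, t, ht, hsign⟩ := hi
    obtain ⟨ht1, ht2⟩ := ht
    have hlo : (0:ℝ) ≤ (i - 1) / n := div_nonneg (by linarith) (le_of_lt hn0)
    have hhi : i / n ≤ 1 := by
      rw [div_le_one hn0]; linarith
    have htmem : t ∈ Icc (0:ℝ) 1 := ⟨le_trans hlo ht1, le_trans ht2 hhi⟩
    have himem : i / (n:ℝ) ∈ Icc (0:ℝ) 1 := ⟨le_trans hlo (le_trans ht1 ht2), hhi⟩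
    have hlomem : (i - 1) / (n:ℝ) ∈ Icc (0:ℝ) 1 := ⟨hlo, le_trans (le_trans ht1 ht2) hhi⟩
    have h0mem : (0:ℝ) ∈ Icc (0:ℝ) 1 := ⟨le_refl 0, zero_le_one⟩
    -- sign step
    have hsub : (∫ x in (0:ℝ)..(i / n), Q x) - (∫ x in (0:ℝ)..t, Q x)
        = ∫ x in t..(i / n), Q x :=
      intervalIntegral.integral_interval_sub_left (hIIQ 0 _ h0mem himem) (hIIQ 0 t h0mem htmem)
    have h1 : |∫ x in (0:ℝ)..(i / n), Q x| ≤ |∫ x in t..(i / n), Q x| := by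
      rw [← hsub]
      exact abs_le_abs_sub_of_sign_ne hsign
    -- Cauchy-Schwarz on [t, i/n]
    have hmemL2 : MemLp Q 2 (volume.restrict (Ioc t (i / n))) := by
      refine hQ.mono_measure (Measure.restrict_mono ?_ le_rfl)
      exact fun x hx => ⟨le_trans htmem.1 (le_of_lt hx.1), le_trans hx.2 hhi⟩
    have h2 := cs_interval ht2 hmemL2
    have hfac1 : Real.sqrt (i / n - t) ≤ Real.sqrt (1 / n) := by
      apply Real.sqrt_le_sqrt
      have hdiff : i / n - (i - 1) / n = 1 / n := by field_simp; ring
      linarith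
    have hsplit : (∫ x in ((i - 1) / n)..t, Q x ^ 2) +
        (∫ x in t..(i / n), Q x ^ 2) = b i :=
      intervalIntegral.integral_add_adjacent_intervals
        (hIIQ2 _ t hlomem htmem) (hIIQ2 t _ htmem himem)
    have hfirst : 0 ≤ ∫ x in ((i - 1) / n)..t, Q x ^ 2 :=
      intervalIntegral.integral_nonneg ht1 (fun x _ => by positivity)
    have hfac2 : Real.sqrt (∫ x in t..(i / n), Q x ^ 2) ≤ Real.sqrt (b i) := by
      apply Real.sqrt_le_sqrt; linarith
    calc |∫ x in (0:ℝ)..(i / n), Q x| ≤ |∫ x in t..(i / n), Q x| := h1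
      _ ≤ Real.sqrt (i / n - t) * Real.sqrt (∫ x in t..(i / n), Q x ^ 2) := h2
      _ ≤ Real.sqrt (1 / n) * Real.sqrt (b i) :=
          mul_le_mul hfac1 hfac2 (Real.sqrt_nonneg _) (Real.sqrt_nonneg _)
  -- nonnegativity of I
  have hInonneg : 0 ≤ I :=
    intervalIntegral.integral_nonneg zero_le_one (fun x _ => by positivity)
  have hmm : ∀ k : ℕ, k ≤ n → ((k:ℝ) / n) ∈ Icc (0:ℝ) 1 := by
    intro k hk
    constructor
    · positivity
    · rw [div_le_one hn0]; exact_mod_cast hk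
  -- telescoping
  have hsumb : ∑ i ∈ N, b i ≤ I := by
    have htel : ∑ k ∈ Finset.range (n - 1),
        (∫ x in (((k:ℕ):ℝ)/n)..((((k+1:ℕ)):ℝ)/n), Q x ^ 2)
        = ∫ x in (((0:ℕ):ℝ)/n)..((((n-1:ℕ)):ℝ)/n), Q x ^ 2 := by
      apply intervalIntegral.sum_integral_adjacent_intervals
      intro k hk
      apply hIIQ2
      · exact hmm k (by omega)
      · exact hmm (k+1) (by omega)
    have hIccImg : Finset.Icc 1 (n-1) = Finset.image (fun k => k + 1) (Finset.range (n-1)) := by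
      ext a
      simp only [Finset.mem_Icc, Finset.mem_image, Finset.mem_range]
      exact ⟨fun h => ⟨a - 1, by omega, by omega⟩, fun ⟨k, hk, he⟩ => by omega⟩
    have hNsum : ∑ i ∈ N, b i = ∑ a ∈ Finset.Icc 1 (n-1), b ((a:ℕ):ℝ) := by
      rw [hN]
      apply Finset.sum_image
      intro x _ y _ hxy
      exact Nat.cast_injective hxy
    have hIcc : ∑ a ∈ Finset.Icc 1 (n-1), b ((a:ℕ):ℝ)
        = ∑ k ∈ Finset.range (n - 1),
          (∫ x in (((k:ℕ):ℝ)/n)..((((k+1:ℕ)):ℝ)/n), Q x ^ 2) := by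
      rw [hIccImg, Finset.sum_image (by intro x _ y _ h; simp only at h; omega)]
      apply Finset.sum_congr rfl
      intro k _
      rw [hb]
      have e1 : (((k+1:ℕ):ℝ) - 1) / n = ((k:ℕ):ℝ)/n := by push_cast; ring_nf
      have e2 : ((k+1:ℕ):ℝ) / n = (((k+1:ℕ)):ℝ)/n := rfl
      simp only [e1, e2]
    have hlast : ∫ x in (((0:ℕ):ℝ)/n)..((((n-1:ℕ)):ℝ)/n), Q x ^ 2 ≤ I := by
      have h0 : ((0:ℕ):ℝ)/n = 0 := by norm_num
      have hm1 : (((n-1:ℕ)):ℝ)/n ∈ Icc (0:ℝ) 1 := hmm (n-1) (by omega)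
      have hadd : (∫ x in (0:ℝ)..((((n-1:ℕ)):ℝ)/n), Q x ^ 2) +
          (∫ x in ((((n-1:ℕ)):ℝ)/n)..1, Q x ^ 2) = I :=
        intervalIntegral.integral_add_adjacent_intervals
          (hIIQ2 0 _ ⟨le_refl 0, zero_le_one⟩ hm1) (hIIQ2 _ 1 hm1 ⟨zero_le_one, le_refl 1⟩)
      have hnn : 0 ≤ ∫ x in ((((n-1:ℕ)):ℝ)/n)..1, Q x ^ 2 :=
        intervalIntegral.integral_nonneg hm1.2 (fun x _ => by positivity)
      rw [h0]; linarith
    rw [hNsum, hIcc, htel]; exact hlast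
  have hEsum : ∑ i ∈ E, b i ≤ I := by
    refine le_trans (Finset.sum_le_sum_of_subset_of_nonneg hEN ?_) hsumb
    intro i hi _
    exact hbnonneg i (hmem i hi).1
  have hcard : (E.card : ℝ) ≤ n := by
    have h1 : E.card ≤ N.card := Finset.card_le_card hEN
    have h2 : N.card ≤ (Finset.Icc 1 (n-1)).card := Finset.card_image_le
    have h3 : (Finset.Icc 1 (n-1)).card = n - 1 := by rw [Nat.card_Icc]; omega
    have : E.card ≤ n := by omega
    exact_mod_cast this
  have hEbnn : 0 ≤ ∑ i ∈ E, b i :=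
    Finset.sum_nonneg fun i hi => hbnonneg i (hmem i (hEN hi)).1
  have hS : ∑ i ∈ E, Real.sqrt (b i) ≤ Real.sqrt ((n:ℝ) * I) := by
    have hsq : (∑ i ∈ E, Real.sqrt (b i)) ^ 2 ≤ (E.card : ℝ) * ∑ i ∈ E, (Real.sqrt (b i)) ^ 2 :=
      sq_sum_le_card_mul_sum_sq
    have hsq2 : ∑ i ∈ E, (Real.sqrt (b i)) ^ 2 = ∑ i ∈ E, b i :=
      Finset.sum_congr rfl fun i hi => Real.sq_sqrt (hbnonneg i (hmem i (hEN hi)).1)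
    have hsumnn : 0 ≤ ∑ i ∈ E, Real.sqrt (b i) :=
      Finset.sum_nonneg fun i _ => Real.sqrt_nonneg _
    calc ∑ i ∈ E, Real.sqrt (b i) = Real.sqrt ((∑ i ∈ E, Real.sqrt (b i)) ^ 2) :=
          (Real.sqrt_sq hsumnn).symm
      _ ≤ Real.sqrt ((n:ℝ) * I) := by
          apply Real.sqrt_le_sqrt
          rw [hsq2] at hsq
          calc (∑ i ∈ E, Real.sqrt (b i)) ^ 2 ≤ (E.card : ℝ) * ∑ i ∈ E, b i := hsq
            _ ≤ (n:ℝ) * I := mul_le_mul hcard hEsum hEbnn (le_of_lt hn0)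
  calc ∑ i ∈ E, |∫ x in (0:ℝ)..(i / (n:ℝ)), Q x|
      ≤ ∑ i ∈ E, Real.sqrt (1 / n) * Real.sqrt (b i) := Finset.sum_le_sum stepA
    _ = Real.sqrt (1 / n) * ∑ i ∈ E, Real.sqrt (b i) := by rw [Finset.mul_sum]
    _ ≤ Real.sqrt (1 / n) * Real.sqrt ((n:ℝ) * I) :=
        mul_le_mul_of_nonneg_left hS (Real.sqrt_nonneg _)
    _ = Real.sqrt ((1 / n) * ((n:ℝ) * I)) := (Real.sqrt_mul (by positivity) _).symm
    _ = Real.sqrt I := by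
        congr 1
        field_simp
end
end

section
/- There exist an orthonormal system (φ_n) on [0,1] and a real number γ with 0 < γ < 1/2 such that, for the constant function f₀(x) = 1 on [0,1], the series Σ_{n=1}^∞ n^γ |c_n(f₀)| diverges to +∞, where c_n(f₀) = ∫_0^1 φ_n(x) dx. -/
open MeasureTheory Set Filter

noncomputable section

/-- our system: normalized indicator of `(1/(n+1), 1/n]`. -/
def myφ (n : ℕ) (x : ℝ) : ℝ :=
  Set.indicator (Ioc (1/((n:ℝ)+1)) (1/(n:ℝ))) (fun _ => Real.sqrt (n*(n+1))) x

lemma integ_indicator (a b c : ℝ) (h : a ≤ b) (h0 : 0 ≤ a) (h1 : b ≤ 1) :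
    ∫ x in (0:ℝ)..1, Set.indicator (Ioc a b) (fun _ => c) x = c * (b - a) := by
  rw [intervalIntegral.integral_of_le zero_le_one,
    MeasureTheory.setIntegral_indicator measurableSet_Ioc,
    Set.inter_eq_self_of_subset_right (Ioc_subset_Ioc h0 h1),
    MeasureTheory.setIntegral_const, measureReal_def, Real.volume_Ioc,
    ENNReal.toReal_ofReal (by linarith)]
  simp [smul_eq_mul]; ring

lemma interval_facts (n : ℕ) (hn : 1 ≤ n) :
    (0:ℝ) ≤ 1/((n:ℝ)+1) ∧ 1/((n:ℝ)+1) ≤ 1/(n:ℝ) ∧ 1/(n:ℝ) ≤ 1 := by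
  have h1 : (1:ℝ) ≤ (n:ℝ) := by exact_mod_cast hn
  refine ⟨by positivity, ?_, ?_⟩
  · apply one_div_le_one_div_of_le (by linarith) (by linarith)
  · rw [div_le_one (by linarith)]; linarith

lemma disjoint_supports {n m : ℕ} (hn : 1 ≤ n) (hnm : n < m) (x : ℝ)
    (hx : x ∈ Ioc (1/((n:ℝ)+1)) (1/(n:ℝ))) (hy : x ∈ Ioc (1/((m:ℝ)+1)) (1/(m:ℝ))) : False := by
  have h1 : (1:ℝ) ≤ (n:ℝ) := by exact_mod_cast hn
  have h2 : (n:ℝ) + 1 ≤ (m:ℝ) := by exact_mod_cast hnm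
  have : 1/(m:ℝ) ≤ 1/((n:ℝ)+1) := one_div_le_one_div_of_le (by linarith) h2
  have := hx.1; have := hy.2
  linarith

lemma myφ_integral (n : ℕ) (hn : 1 ≤ n) :
    ∫ x in (0:ℝ)..1, myφ n x = (Real.sqrt ((n:ℝ)*((n:ℝ)+1)))⁻¹ := by
  obtain ⟨h0, h, h1⟩ := interval_facts n hn
  have hn1 : (1:ℝ) ≤ (n:ℝ) := by exact_mod_cast hn
  unfold myφ
  rw [integ_indicator _ _ _ h h0 h1]
  have hd : 1/(n:ℝ) - 1/((n:ℝ)+1) = ((n:ℝ)*((n:ℝ)+1))⁻¹ := by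
    field_simp
    ring
  rw [hd]
  refine (inv_eq_of_mul_eq_one_right ?_).symm
  rw [← mul_assoc, Real.mul_self_sqrt (by positivity), mul_inv_cancel₀ (by positivity)]

theorem statement5 :
    ∃ φ : ℕ → ℝ → ℝ, IsONS φ ∧ ∃ γ : ℝ, 0 < γ ∧ γ < 1 / 2 ∧
      ¬ Summable (fun n : ℕ =>
        ((n:ℝ) + 1) ^ γ * |∫ x in (0:ℝ)..1, φ (n + 1) x|) := by
  refine ⟨myφ, ⟨?_, ?_⟩, 1/4, by norm_num, by norm_num, ?_⟩
  · -- Memℒp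
    intro n hn
    exact memLp_indicator_const 2 measurableSet_Ioc _ (Or.inr (by finiteness))
  · -- orthonormality
    intro n m hn hm
    rcases eq_or_ne n m with rfl | hne
    · simp only [if_pos rfl]
      obtain ⟨h0, h, h1⟩ := interval_facts n hn
      have hprod : ∀ x, myφ n x * myφ n x =
          Set.indicator (Ioc (1/((n:ℝ)+1)) (1/(n:ℝ))) (fun _ => (n:ℝ)*((n:ℝ)+1)) x := by
        intro x
        unfold myφ
        by_cases hx : x ∈ Ioc (1/((n:ℝ)+1)) (1/(n:ℝ))
        · rw [Set.indicator_of_mem hx, Set.indicator_of_mem hx,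
            Real.mul_self_sqrt (by positivity)]
        · rw [Set.indicator_of_notMem hx, Set.indicator_of_notMem hx, mul_zero]
      simp_rw [hprod]
      rw [integ_indicator _ _ _ h h0 h1]
      have hn1 : (1:ℝ) ≤ (n:ℝ) := by exact_mod_cast hn
      field_simp
      simp
    · simp only [if_neg hne]
      have hzero : ∀ x, myφ n x * myφ m x = 0 := by
        intro x
        unfold myφ
        by_cases hx : x ∈ Ioc (1/((n:ℝ)+1)) (1/(n:ℝ))
        · by_cases hy : x ∈ Ioc (1/((m:ℝ)+1)) (1/(m:ℝ))
          · exfalso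
            rcases lt_or_gt_of_ne hne with hlt | hlt
            · exact disjoint_supports hn hlt x hx hy
            · exact disjoint_supports hm hlt x hy hx
          · rw [Set.indicator_of_notMem hy, mul_zero]
        · rw [Set.indicator_of_notMem hx, zero_mul]
      simp_rw [hzero]
      simp
  · -- non-summability
    intro hS
    have key : ∀ n : ℕ, (1/2 : ℝ) * ((n:ℝ)+2) ^ (-(3/4) : ℝ) ≤
        ((n:ℝ) + 1) ^ (1/4 : ℝ) * |∫ x in (0:ℝ)..1, myφ (n + 1) x| := by
      intro n
      have hcast : ((n+1 : ℕ) : ℝ) = (n:ℝ) + 1 := by push_cast; ring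
      rw [myφ_integral (n+1) (by omega)]
      rw [hcast]
      have h2 : (0:ℝ) < (n:ℝ) + 2 := by positivity
      have h1 : (0:ℝ) < (n:ℝ) + 1 := by positivity
      have hsq : Real.sqrt (((n:ℝ)+1)*(((n:ℝ)+1)+1)) ≤ (n:ℝ)+2 := by
        rw [show ((n:ℝ)+1)+1 = (n:ℝ)+2 by ring]
        calc Real.sqrt (((n:ℝ)+1)*((n:ℝ)+2)) ≤ Real.sqrt (((n:ℝ)+2)*((n:ℝ)+2)) := by
              apply Real.sqrt_le_sqrt; nlinarith
          _ = (n:ℝ)+2 := Real.sqrt_mul_self h2.le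
      have hsqpos : 0 < Real.sqrt (((n:ℝ)+1)*(((n:ℝ)+1)+1)) := Real.sqrt_pos.mpr (by positivity)
      have habs : |(Real.sqrt (((n:ℝ)+1)*(((n:ℝ)+1)+1)))⁻¹| = (Real.sqrt (((n:ℝ)+1)*(((n:ℝ)+1)+1)))⁻¹ :=
        abs_of_pos (by positivity)
      rw [habs]
      have hc : ((n:ℝ)+2)⁻¹ ≤ (Real.sqrt (((n:ℝ)+1)*(((n:ℝ)+1)+1)))⁻¹ :=
        inv_anti₀ hsqpos hsq
      have hpow : ((n:ℝ)+2) ^ (1/4 : ℝ) ≤ 2 * ((n:ℝ)+1) ^ (1/4 : ℝ) := by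
        calc ((n:ℝ)+2) ^ (1/4 : ℝ) ≤ (2*((n:ℝ)+1)) ^ (1/4 : ℝ) :=
              Real.rpow_le_rpow (by positivity) (by linarith) (by norm_num)
          _ = 2 ^ (1/4 : ℝ) * ((n:ℝ)+1) ^ (1/4 : ℝ) :=
              Real.mul_rpow (by norm_num) h1.le
          _ ≤ 2 * ((n:ℝ)+1) ^ (1/4 : ℝ) := by
              apply mul_le_mul_of_nonneg_right _ (by positivity)
              calc (2:ℝ) ^ (1/4 : ℝ) ≤ 2 ^ (1:ℝ) :=
                    Real.rpow_le_rpow_of_exponent_le (by norm_num) (by norm_num)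
                _ = 2 := Real.rpow_one 2
      have hsplit : ((n:ℝ)+2) ^ (-(3/4) : ℝ) = ((n:ℝ)+2) ^ (1/4 : ℝ) * ((n:ℝ)+2)⁻¹ := by
        rw [← Real.rpow_neg_one ((n:ℝ)+2), ← Real.rpow_add h2]
        norm_num
      rw [hsplit]
      calc (1/2 : ℝ) * (((n:ℝ)+2) ^ (1/4 : ℝ) * ((n:ℝ)+2)⁻¹)
          ≤ (1/2 : ℝ) * ((2 * ((n:ℝ)+1) ^ (1/4 : ℝ)) * ((n:ℝ)+2)⁻¹) := by
            apply mul_le_mul_of_nonneg_left (mul_le_mul_of_nonneg_right hpow (by positivity)) (by norm_num)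
        _ = ((n:ℝ)+1) ^ (1/4 : ℝ) * ((n:ℝ)+2)⁻¹ := by ring
        _ ≤ ((n:ℝ)+1) ^ (1/4 : ℝ) * (Real.sqrt (((n:ℝ)+1)*(((n:ℝ)+1)+1)))⁻¹ :=
            mul_le_mul_of_nonneg_left hc (by positivity)
    have hS2 : Summable (fun n : ℕ => (1/2 : ℝ) * ((n:ℝ)+2) ^ (-(3/4) : ℝ)) :=
      Summable.of_nonneg_of_le (fun n => by positivity) key hS
    have hS3 : Summable (fun n : ℕ => ((n:ℝ)+2) ^ (-(3/4) : ℝ)) := by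
      have := hS2.mul_left 2
      simpa using this
    have hS4 : Summable (fun n : ℕ => ((n:ℝ)) ^ (-(3/4) : ℝ)) := by
      rw [← summable_nat_add_iff 2]
      convert hS3 using 2 with n
      · rfl
      · push_cast; ring_nf
    rw [Real.summable_nat_rpow] at hS4
    norm_num at hS4
end
end

section
/- Let (φ_k) be an orthonormal system on [0,1] with ∫_0^1 φ_k(x) dx = 0 for k = 1,…,N, let (d_k) be positive real numbers, let ε = (ε_k) be a sequence with ε_k ∈ {-1,0,1}, let N ≥ 2, and set Q_N(x,ε) = Σ_{k=1}^N d_k k^{1/2} ε_k φ_k(x). Define f_N(x) = ∫_0^x sign(∫_0^y Q_N(z,ε) dz) dy for x ∈ [0,1]. Then |∫_0^1 f_N(x) Q_N(x,ε) dx| ≥ D_N(ε) − 3 · max_{1≤k≤N} d_k, where D_N(ε) = (1/N) Σ_{i=1}^{N−1} |∫_0^{i/N} Q_N(x,ε) dx|. -/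
open MeasureTheory Set Filter

noncomputable section

lemma measurable_realSign : Measurable Real.sign := by
  unfold Real.sign
  exact Measurable.ite measurableSet_Iio measurable_const
    (Measurable.ite measurableSet_Ioi measurable_const measurable_const)

lemma abs_realSign_le_one (t : ℝ) : |Real.sign t| ≤ 1 := by
  rcases lt_trichotomy t 0 with h|h|h
  · simp [Real.sign_of_neg h]
  · simp [h]
  · simp [Real.sign_of_pos h]

lemma realSign_mul_self (t : ℝ) : Real.sign t * t = |t| := by
  rcases lt_trichotomy t 0 with h|h|h
  · simp [Real.sign_of_neg h, abs_of_neg h]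
  · simp [h]
  · simp [Real.sign_of_pos h, abs_of_pos h]

lemma memLp_integrable_mul {α : Type*} [MeasurableSpace α] {μ : Measure α} {f g : α → ℝ}
    (hf : MemLp f 2 μ) (hg : MemLp g 2 μ) : Integrable (fun x => f x * g x) μ := by
  have h := (((hf.add hg).integrable_sq.sub hf.integrable_sq).sub hg.integrable_sq).div_const 2
  refine h.congr (Filter.Eventually.of_forall fun x => ?_)
  simp only [Pi.sub_apply, Pi.add_apply]
  ring

set_option maxHeartbeats 1000000 in
theorem statement9 (φ : ℕ → ℝ → ℝ) (hONS : IsONS φ)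
    (d : ℕ → ℝ) (hdpos : ∀ k, 0 < d k)
    (ε : ℕ → ℝ) (hε : ∀ n, ε n = -1 ∨ ε n = 0 ∨ ε n = 1)
    (N : ℕ) (hN : 2 ≤ N)
    (hzero : ∀ k, 1 ≤ k → k ≤ N → (∫ x in (0:ℝ)..1, φ k x) = 0)
    (fN : ℝ → ℝ)
    (hfN : ∀ x ∈ Icc (0:ℝ) 1,
      fN x = ∫ y in (0:ℝ)..x, Real.sign (∫ z in (0:ℝ)..y, QN φ d ε N z)) :
    |∫ x in (0:ℝ)..1, fN x * QN φ d ε N x| ≥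
      DN φ d ε N -
        3 * (Finset.Icc 1 N).sup' (Finset.nonempty_Icc.mpr (by omega)) d := by
  classical
  have hN0 : (0:ℝ) < N := by exact_mod_cast Nat.lt_of_lt_of_le Nat.zero_lt_two hN
  set M := (Finset.Icc 1 N).sup' (Finset.nonempty_Icc.mpr (by omega : (1:ℕ) ≤ N)) d with hMdef
  set Q : ℝ → ℝ := QN φ d ε N with hQdef
  set P : ℝ → ℝ := fun y => ∫ z in (0:ℝ)..y, Q z with hPdef
  set s : ℝ → ℝ := fun y => Real.sign (P y) with hsdef
  have hPapp : ∀ y, P y = ∫ z in (0:ℝ)..y, Q z := fun _ => rfl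
  have hsapp : ∀ y, s y = Real.sign (P y) := fun _ => rfl
  -- basic facts
  have hMpos : 0 < M := lt_of_lt_of_le (hdpos 1)
    (Finset.le_sup' d (by simp [Finset.mem_Icc]; omega))
  have hfinIcc : IsFiniteMeasure (volume.restrict (Icc (0:ℝ) 1)) := by
    constructor
    rw [Measure.restrict_apply_univ, Real.volume_Icc]
    exact ENNReal.ofReal_lt_top
  have hφ2 : ∀ k ∈ Finset.Icc 1 N, MemLp (φ k) 2 (volume.restrict (Icc (0:ℝ) 1)) :=
    fun k hk => hONS.1 k (Finset.mem_Icc.mp hk).1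
  have hQ2 : MemLp Q 2 (volume.restrict (Icc (0:ℝ) 1)) := by
    have h := memLp_finset_sum (μ := volume.restrict (Icc (0:ℝ) 1)) (p := 2)
      (f := fun k x => d k * Real.sqrt k * ε k * φ k x) (Finset.Icc 1 N)
      (fun k hk => ((hφ2 k hk).const_mul _))
    exact h
  have hQIcc : IntegrableOn Q (Icc (0:ℝ) 1) := hQ2.integrable one_le_two
  have key_ii : ∀ (f : ℝ → ℝ), IntegrableOn f (Icc (0:ℝ) 1) volume →
      ∀ a b : ℝ, a ∈ Icc (0:ℝ) 1 → b ∈ Icc (0:ℝ) 1 → IntervalIntegrable f volume a b := by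
    intro f hf a b ha hb
    rw [intervalIntegrable_iff]
    exact hf.mono_set (uIoc_subset_uIcc.trans (uIcc_subset_Icc ha hb))
  have hQii : ∀ a b : ℝ, a ∈ Icc (0:ℝ) 1 → b ∈ Icc (0:ℝ) 1 → IntervalIntegrable Q volume a b :=
    key_ii Q hQIcc
  have h01 : (0:ℝ) ∈ Icc (0:ℝ) 1 := ⟨le_refl 0, zero_le_one⟩
  have h11 : (1:ℝ) ∈ Icc (0:ℝ) 1 := ⟨zero_le_one, le_refl 1⟩
  have hPcont : ContinuousOn P (Icc (0:ℝ) 1) := by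
    have h := intervalIntegral.continuousOn_primitive_interval (a := (0:ℝ)) (b := 1)
      (μ := volume) (f := Q) (by rwa [uIcc_of_le zero_le_one])
    rwa [uIcc_of_le zero_le_one] at h
  have hP1 : P 1 = 0 := by
    rw [hPapp, hQdef]
    unfold QN
    rw [intervalIntegral.integral_finset_sum (fun k hk =>
      ((key_ii (φ k) ((hφ2 k hk).integrable one_le_two) 0 1 h01 h11).const_mul _))]
    refine Finset.sum_eq_zero fun k hk => ?_
    rw [intervalIntegral.integral_const_mul,
      hzero k (Finset.mem_Icc.mp hk).1 (Finset.mem_Icc.mp hk).2, mul_zero]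
  -- measurability / integrability on (0,1]
  have hQμ : Integrable Q (volume.restrict (Ioc (0:ℝ) 1)) := hQIcc.mono_set Ioc_subset_Icc_self
  have hsmeas : AEStronglyMeasurable s (volume.restrict (Ioc (0:ℝ) 1)) := by
    have hPm : AEMeasurable P (volume.restrict (Ioc (0:ℝ) 1)) :=
      (hPcont.aemeasurable measurableSet_Icc).mono_measure
        (Measure.restrict_mono Ioc_subset_Icc_self le_rfl)
    exact (measurable_realSign.comp_aemeasurable hPm).aestronglyMeasurable
  have hsb : ∀ y, |s y| ≤ 1 := fun y => abs_realSign_le_one _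
  -- Fubini setup
  have hFmeas : AEStronglyMeasurable (fun p : ℝ × ℝ => (if p.2 ≤ p.1 then s p.2 else 0) * Q p.1)
      ((volume.restrict (Ioc (0:ℝ) 1)).prod (volume.restrict (Ioc (0:ℝ) 1))) := by
    have h1 : AEStronglyMeasurable (fun p : ℝ × ℝ => s p.2)
        ((volume.restrict (Ioc (0:ℝ) 1)).prod (volume.restrict (Ioc (0:ℝ) 1))) := hsmeas.comp_quasiMeasurePreserving Measure.quasiMeasurePreserving_snd
    have h2 : AEStronglyMeasurable (fun p : ℝ × ℝ => Q p.1)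
        ((volume.restrict (Ioc (0:ℝ) 1)).prod (volume.restrict (Ioc (0:ℝ) 1))) :=
      hQμ.aestronglyMeasurable.comp_quasiMeasurePreserving Measure.quasiMeasurePreserving_fst
    have h3 : MeasurableSet {p : ℝ × ℝ | p.2 ≤ p.1} :=
      measurableSet_le measurable_snd measurable_fst
    have h4 : (fun p : ℝ × ℝ => (if p.2 ≤ p.1 then s p.2 else 0))
        = {p : ℝ × ℝ | p.2 ≤ p.1}.indicator (fun p => s p.2) := by
      funext p
      by_cases h : p.2 ≤ p.1 <;> simp [Set.indicator_apply, h]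
    exact (h4 ▸ (h1.indicator h3)).mul h2
  have hFint : Integrable (fun p : ℝ × ℝ => (if p.2 ≤ p.1 then s p.2 else 0) * Q p.1)
      ((volume.restrict (Ioc (0:ℝ) 1)).prod (volume.restrict (Ioc (0:ℝ) 1))) := by
    have hbound : Integrable (fun p : ℝ × ℝ => |Q p.1| * 1)
        ((volume.restrict (Ioc (0:ℝ) 1)).prod (volume.restrict (Ioc (0:ℝ) 1))) :=
      hQμ.abs.mul_prod (integrable_const 1)
    simp only [mul_one] at hbound
    refine Integrable.mono' hbound hFmeas (Eventually.of_forall fun p => ?_)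
    rw [Real.norm_eq_abs, abs_mul]
    rcases le_or_gt p.2 p.1 with h|h
    · rw [if_pos h]
      calc |s p.2| * |Q p.1| ≤ 1 * |Q p.1| :=
            mul_le_mul_of_nonneg_right (hsb p.2) (abs_nonneg _)
        _ = |Q p.1| := one_mul _
    · rw [if_neg (not_le.mpr h), abs_zero, zero_mul]
      exact abs_nonneg _
  -- evaluate the inner integrals
  have hinner1 : ∀ x ∈ Ioc (0:ℝ) 1,
      (∫ y in (0:ℝ)..x, s y) = ∫ y in Ioc (0:ℝ) 1, (if y ≤ x then s y else 0) := by
    intro x hx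
    have h1 : ∀ y ∈ Ioc (0:ℝ) 1, (if y ≤ x then s y else 0) = (Ioc 0 x).indicator s y := by
      intro y hy
      by_cases h : y ≤ x <;> simp [Set.indicator_apply, Set.mem_Ioc, h, hy.1]
    rw [setIntegral_congr_fun measurableSet_Ioc h1, setIntegral_indicator measurableSet_Ioc]
    have h2 : Ioc (0:ℝ) 1 ∩ Ioc 0 x = Ioc 0 x :=
      inter_eq_right.mpr (Ioc_subset_Ioc le_rfl hx.2)
    rw [h2, intervalIntegral.integral_of_le hx.1.le]
  have hinner2 : ∀ y ∈ Ioc (0:ℝ) 1,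
      (∫ x in Ioc (0:ℝ) 1, (if y ≤ x then Q x else 0)) = - P y := by
    intro y hy
    have hymem : y ∈ Icc (0:ℝ) 1 := ⟨hy.1.le, hy.2⟩
    have h1 : ∀ x ∈ Ioc (0:ℝ) 1, (if y ≤ x then Q x else 0) = (Icc y 1).indicator Q x := by
      intro x hx
      by_cases h : y ≤ x <;> simp [Set.indicator_apply, Set.mem_Icc, h, hx.2]
    rw [setIntegral_congr_fun measurableSet_Ioc h1, setIntegral_indicator measurableSet_Icc]
    have h2 : Ioc (0:ℝ) 1 ∩ Icc y 1 = Icc y 1 :=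
      inter_eq_right.mpr (fun x hx => ⟨lt_of_lt_of_le hy.1 hx.1, hx.2⟩)
    rw [h2, integral_Icc_eq_integral_Ioc, ← intervalIntegral.integral_of_le hy.2]
    have h3 := intervalIntegral.integral_add_adjacent_intervals
      (hQii 0 y h01 hymem) (hQii y 1 hymem h11)
    have h4 := hPapp y
    have h5 := hPapp 1
    linarith [hP1]
  -- the key identity : ∫ fN ⬝ Q = - ∫ |P|
  have hkey : (∫ x in (0:ℝ)..1, fN x * Q x) = - ∫ y in Ioc (0:ℝ) 1, |P y| := by
    have stepA : (∫ x in (0:ℝ)..1, fN x * Q x)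
        = ∫ x in (0:ℝ)..1, (∫ y in (0:ℝ)..x, s y) * Q x := by
      apply intervalIntegral.integral_congr
      intro x hx
      rw [uIcc_of_le zero_le_one] at hx
      show fN x * Q x = (∫ y in (0:ℝ)..x, s y) * Q x
      rw [hfN x hx]
    rw [stepA, intervalIntegral.integral_of_le zero_le_one]
    have e1 : EqOn (fun x => (∫ y in (0:ℝ)..x, s y) * Q x)
        (fun x => (∫ y in Ioc (0:ℝ) 1, (if y ≤ x then s y else 0)) * Q x) (Ioc 0 1) := by
      intro x hx
      dsimp only
      rw [hinner1 x hx]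
    rw [setIntegral_congr_fun measurableSet_Ioc e1]
    have e2 : (∫ x in Ioc (0:ℝ) 1, (∫ y in Ioc (0:ℝ) 1, (if y ≤ x then s y else 0)) * Q x)
        = ∫ x in Ioc (0:ℝ) 1, ∫ y in Ioc (0:ℝ) 1, (if y ≤ x then s y else 0) * Q x := by
      apply setIntegral_congr_fun measurableSet_Ioc
      intro x _
      dsimp only
      rw [← integral_mul_const]
    rw [e2]
    rw [integral_integral_swap (f := fun x y => (if y ≤ x then s y else 0) * Q x) (by exact hFint)]
    have e3 : EqOn (fun y => ∫ x in Ioc (0:ℝ) 1, (if y ≤ x then s y else 0) * Q x)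
        (fun y => - |P y|) (Ioc 0 1) := by
      intro y hy
      dsimp only
      have h1 : (fun x => (if y ≤ x then s y else 0) * Q x)
          = fun x => s y * (if y ≤ x then Q x else 0) := by
        funext x
        by_cases h : y ≤ x <;> simp [h]
      rw [h1, integral_const_mul, hinner2 y hy, hsapp y, mul_neg, realSign_mul_self]
    rw [setIntegral_congr_fun measurableSet_Ioc e3, integral_neg]
  have habs : |∫ x in (0:ℝ)..1, fN x * Q x| = ∫ y in Ioc (0:ℝ) 1, |P y| := by
    rw [hkey, abs_neg, abs_of_nonneg]
    exact setIntegral_nonneg measurableSet_Ioc (fun y _ => abs_nonneg _)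
  -- Part 2 : lower bound for ∫ |P| by D_N
  set A : ℕ → ℝ := fun i => ((i:ℝ)+1)/N with hAdef
  have hAapp : ∀ i : ℕ, A i = ((i:ℝ)+1)/N := fun _ => rfl
  have hmem : ∀ i : ℕ, i + 1 ≤ N → A i ∈ Icc (0:ℝ) 1 := by
    intro i hi
    rw [hAapp]
    constructor
    · positivity
    · rw [div_le_one hN0]
      have h : ((i:ℝ)+1) = ((i+1:ℕ):ℝ) := by push_cast; ring
      rw [h]
      exact_mod_cast hi
  have hPabs_ii : ∀ a b : ℝ, a ∈ Icc (0:ℝ) 1 → b ∈ Icc (0:ℝ) 1 →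
      IntervalIntegrable (fun y => |P y|) volume a b := fun a b ha hb =>
    ((hPcont.mono (uIcc_subset_Icc ha hb)).abs).intervalIntegrable
  have hA0 : A 0 = 1/(N:ℝ) := by rw [hAapp]; norm_num
  have hAlast : A (N-1) = 1 := by
    rw [hAapp, Nat.cast_sub (by omega : 1 ≤ N)]
    field_simp
    simp
  have hAmono : ∀ i : ℕ, A i ≤ A (i+1) := by
    intro i
    rw [hAapp, hAapp]
    apply (div_le_div_iff_of_pos_right hN0).mpr
    push_cast
    linarith
  have hstep : ∀ i : ℕ, i < N - 1 →
      (1/(N:ℝ)) * |P (A i)| - (1/(N:ℝ)) * (∫ t in A i..A (i+1), |Q t|)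
        ≤ ∫ x in A i..A (i+1), |P x| := by
    intro i hi
    have hci : A i ∈ Icc (0:ℝ) 1 := hmem i (by omega)
    have hci' : A (i+1) ∈ Icc (0:ℝ) 1 := hmem (i+1) (by omega)
    have hle : A i ≤ A (i+1) := hAmono i
    have hdiff : A (i+1) - A i = 1/(N:ℝ) := by
      rw [hAapp, hAapp]
      push_cast
      field_simp
      ring
    have hQabs_ii : IntervalIntegrable (fun t => |Q t|) volume (A i) (A (i+1)) :=
      (hQii _ _ hci hci').abs
    have hptwise : ∀ x ∈ Icc (A i) (A (i+1)),
        |P (A i)| - (∫ t in A i..A (i+1), |Q t|) ≤ |P x| := by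
      intro x hx
      have hxI : x ∈ Icc (0:ℝ) 1 := ⟨le_trans hci.1 hx.1, le_trans hx.2 hci'.2⟩
      have h1 : P x - P (A i) = ∫ t in A i..x, Q t := by
        rw [hPapp, hPapp]
        exact intervalIntegral.integral_interval_sub_left (hQii 0 x h01 hxI)
          (hQii 0 (A i) h01 hci)
      have h2 : |∫ t in A i..x, Q t| ≤ ∫ t in A i..x, |Q t| :=
        intervalIntegral.abs_integral_le_integral_abs hx.1
      have h3 : (∫ t in A i..x, |Q t|) ≤ ∫ t in A i..A (i+1), |Q t| :=
        intervalIntegral.integral_mono_interval le_rfl hx.1 hx.2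
          (Eventually.of_forall fun t => abs_nonneg _) hQabs_ii
      have h4 : |P (A i)| - |P x| ≤ |P (A i) - P x| := abs_sub_abs_le_abs_sub _ _
      rw [abs_sub_comm, h1] at h4
      linarith
    have h5 := intervalIntegral.integral_mono_on hle intervalIntegrable_const
      (hPabs_ii _ _ hci hci') hptwise
    rw [intervalIntegral.integral_const, smul_eq_mul, hdiff] at h5
    linarith
  have hsumP : ∑ i ∈ Finset.range (N-1), ∫ x in A i..A (i+1), |P x|
      = ∫ x in (A 0)..(A (N-1)), |P x| :=
    intervalIntegral.sum_integral_adjacent_intervals (fun k hk =>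
      hPabs_ii _ _ (hmem k (by omega)) (hmem (k+1) (by omega)))
  have hsumQ : ∑ i ∈ Finset.range (N-1), ∫ t in A i..A (i+1), |Q t|
      = ∫ t in (A 0)..(A (N-1)), |Q t| :=
    intervalIntegral.sum_integral_adjacent_intervals (fun k hk =>
      (hQii _ _ (hmem k (by omega)) (hmem (k+1) (by omega))).abs)
  have hP_lower : (1/(N:ℝ)) * (∑ i ∈ Finset.range (N-1), |P (A i)|)
      - (1/(N:ℝ)) * (∫ t in (A 0)..(A (N-1)), |Q t|) ≤ ∫ x in (A 0)..(A (N-1)), |P x| := by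
    rw [← hsumP, ← hsumQ, Finset.mul_sum, Finset.mul_sum, ← Finset.sum_sub_distrib]
    exact Finset.sum_le_sum fun i hi => hstep i (Finset.mem_range.mp hi)
  have hDN : DN φ d ε N = (1/(N:ℝ)) * ∑ i ∈ Finset.range (N-1), |P (A i)| := by
    unfold DN
    rw [← hQdef]
    congr 1
    have h1 : Finset.Icc 1 (N-1) = Finset.Ico 1 N := by
      rw [← Finset.Ico_add_one_right_eq_Icc]
      congr 1
      omega
    rw [h1, Finset.sum_Ico_eq_sum_range]
    apply Finset.sum_congr rfl
    intro i hi
    rw [hPapp, hAapp]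
    have h2 : ((1+i:ℕ):ℝ) = (i:ℝ)+1 := by push_cast; ring
    rw [h2]
  have hA0mem : A 0 ∈ Icc (0:ℝ) 1 := hmem 0 (by omega)
  have hAlastmem : A (N-1) ∈ Icc (0:ℝ) 1 := by rw [hAlast]; exact h11
  have hA0le : A 0 ≤ A (N-1) := by
    rw [hA0, hAlast, div_le_one hN0]
    exact_mod_cast (by omega : 1 ≤ N)
  have hQmono : (∫ t in (A 0)..(A (N-1)), |Q t|) ≤ ∫ t in (0:ℝ)..1, |Q t| :=
    intervalIntegral.integral_mono_interval hA0mem.1 hA0le hAlastmem.2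
      (Eventually.of_forall fun t => abs_nonneg _) ((hQii 0 1 h01 h11).abs)
  have hPmono : (∫ x in (A 0)..(A (N-1)), |P x|) ≤ ∫ x in (0:ℝ)..1, |P x| :=
    intervalIntegral.integral_mono_interval hA0mem.1 hA0le hAlastmem.2
      (Eventually.of_forall fun x => abs_nonneg _) (hPabs_ii 0 1 h01 h11)
  have hIocP : (∫ y in Ioc (0:ℝ) 1, |P y|) = ∫ x in (0:ℝ)..1, |P x| :=
    (intervalIntegral.integral_of_le zero_le_one).symm
  -- Part 3 : Cauchy-Schwarz bound for ∫ |Q|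
  have hμuniv : ((volume.restrict (Ioc (0:ℝ) 1)) univ).toReal = 1 := by
    rw [Measure.restrict_apply_univ, Real.volume_Ioc]
    norm_num
  have hQ2μ : MemLp Q 2 (volume.restrict (Ioc (0:ℝ) 1)) :=
    hQ2.mono_measure (Measure.restrict_mono Ioc_subset_Icc_self le_rfl)
  have hQsq : Integrable (fun x => Q x ^ 2) (volume.restrict (Ioc (0:ℝ) 1)) :=
    hQ2μ.integrable_sq
  have hφμ2 : ∀ k ∈ Finset.Icc 1 N, MemLp (φ k) 2 (volume.restrict (Ioc (0:ℝ) 1)) :=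
    fun k hk => (hφ2 k hk).mono_measure (Measure.restrict_mono Ioc_subset_Icc_self le_rfl)
  have hQQ : (∫ x in Ioc (0:ℝ) 1, Q x ^ 2)
      = ∑ k ∈ Finset.Icc 1 N, (d k * Real.sqrt k * ε k)^2 := by
    have e2 : (fun x => Q x ^ 2) = fun x => ∑ k ∈ Finset.Icc 1 N, ∑ j ∈ Finset.Icc 1 N,
        (d k * Real.sqrt k * ε k * φ k x) * (d j * Real.sqrt j * ε j * φ j x) := by
      funext x
      rw [hQdef]
      show (QN φ d ε N x)^2 = _
      unfold QN
      rw [sq, Finset.sum_mul_sum]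
    rw [e2]
    have hint : ∀ k ∈ Finset.Icc 1 N, ∀ j ∈ Finset.Icc 1 N, Integrable
        (fun x => (d k * Real.sqrt k * ε k * φ k x) * (d j * Real.sqrt j * ε j * φ j x))
        (volume.restrict (Ioc (0:ℝ) 1)) := by
      intro k hk j hj
      have h := (memLp_integrable_mul (hφμ2 k hk) (hφμ2 j hj)).const_mul
        ((d k * Real.sqrt k * ε k) * (d j * Real.sqrt j * ε j))
      refine h.congr (Eventually.of_forall fun x => ?_)
      ring
    rw [integral_finset_sum _ (fun k hk => integrable_finset_sum _ (fun j hj => hint k hk j hj))]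
    refine Finset.sum_congr rfl fun k hk => ?_
    rw [integral_finset_sum _ (fun j hj => hint k hk j hj)]
    have e3 : ∀ j ∈ Finset.Icc 1 N, (∫ x in Ioc (0:ℝ) 1,
        (d k * Real.sqrt k * ε k * φ k x) * (d j * Real.sqrt j * ε j * φ j x))
        = (d k * Real.sqrt k * ε k) * (d j * Real.sqrt j * ε j) * (if k = j then 1 else 0) := by
      intro j hj
      have e4 : (fun x => (d k * Real.sqrt k * ε k * φ k x) * (d j * Real.sqrt j * ε j * φ j x))
          = fun x => ((d k * Real.sqrt k * ε k) * (d j * Real.sqrt j * ε j)) * (φ k x * φ j x) := by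
        funext x; ring
      rw [e4, integral_const_mul, ← intervalIntegral.integral_of_le zero_le_one,
        hONS.2 k j (Finset.mem_Icc.mp hk).1 (Finset.mem_Icc.mp hj).1]
    rw [Finset.sum_congr rfl e3]
    simp only [mul_ite, mul_one, mul_zero]
    rw [Finset.sum_ite_eq, if_pos hk, ← pow_two]
  have hI0 : 0 ≤ ∫ t in (0:ℝ)..1, |Q t| :=
    intervalIntegral.integral_nonneg zero_le_one (fun t _ => abs_nonneg _)
  have hIeq : (∫ t in (0:ℝ)..1, |Q t|) = ∫ t in Ioc (0:ℝ) 1, |Q t| :=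
    intervalIntegral.integral_of_le zero_le_one
  have hCS : (∫ t in (0:ℝ)..1, |Q t|)^2 ≤ ∫ x in Ioc (0:ℝ) 1, Q x ^ 2 := by
    set I := ∫ t in (0:ℝ)..1, |Q t| with hIdef
    have h0 : 0 ≤ ∫ x in Ioc (0:ℝ) 1, (|Q x| - I)^2 :=
      integral_nonneg fun x => sq_nonneg _
    have e1 : (fun x => (|Q x| - I)^2) = fun x => (Q x^2 - (2*I) * |Q x|) + I^2 := by
      funext x
      rw [← sq_abs (Q x)]
      ring
    have hint1 : Integrable (fun x => Q x ^ 2 - (2*I) * |Q x|)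
        (volume.restrict (Ioc (0:ℝ) 1)) := hQsq.sub ((hQμ.abs).const_mul _)
    have hint2 : Integrable (fun x => (2*I) * |Q x|)
        (volume.restrict (Ioc (0:ℝ) 1)) := (hQμ.abs).const_mul _
    rw [e1, integral_add hint1 (integrable_const _),
      integral_sub hQsq hint2, integral_const_mul, integral_const,
      measureReal_def, hμuniv, one_smul, ← hIeq] at h0
    nlinarith [h0]
  have hbound2 : ∑ k ∈ Finset.Icc 1 N, (d k * Real.sqrt k * ε k)^2 ≤ ((N:ℝ) * M)^2 := by
    have hterm : ∀ k ∈ Finset.Icc 1 N, (d k * Real.sqrt k * ε k)^2 ≤ (N:ℝ) * M^2 := by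
      intro k hk
      obtain ⟨hk1, hk2⟩ := Finset.mem_Icc.mp hk
      have hdk : d k ≤ M := Finset.le_sup' d hk
      have hd0 : 0 ≤ d k := (hdpos k).le
      have hε2 : (ε k)^2 ≤ 1 := by rcases hε k with h|h|h <;> rw [h] <;> norm_num
      have hsq2 : (Real.sqrt (k:ℝ))^2 = (k:ℝ) := Real.sq_sqrt (Nat.cast_nonneg k)
      have hkN : (k:ℝ) ≤ (N:ℝ) := Nat.cast_le.mpr hk2
      have hk0 : (0:ℝ) ≤ k := Nat.cast_nonneg k
      have e : (d k * Real.sqrt (k:ℝ) * ε k)^2 = d k^2 * (Real.sqrt (k:ℝ))^2 * (ε k)^2 := by ring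
      rw [e, hsq2]
      have hd2 : d k^2 ≤ M^2 := pow_le_pow_left₀ hd0 hdk 2
      calc d k^2 * (k:ℝ) * ε k^2 ≤ d k^2 * (k:ℝ) * 1 :=
            mul_le_mul_of_nonneg_left hε2 (by positivity)
        _ = d k^2 * (k:ℝ) := mul_one _
        _ ≤ M^2 * (N:ℝ) := mul_le_mul hd2 hkN hk0 (sq_nonneg M)
        _ = (N:ℝ) * M^2 := mul_comm _ _
    calc ∑ k ∈ Finset.Icc 1 N, (d k * Real.sqrt k * ε k)^2
        ≤ ∑ _k ∈ Finset.Icc 1 N, (N:ℝ) * M^2 := Finset.sum_le_sum hterm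
      _ = (N:ℝ) * ((N:ℝ) * M^2) := by
          rw [Finset.sum_const, Nat.card_Icc, Nat.add_sub_cancel, nsmul_eq_mul]
      _ = ((N:ℝ)*M)^2 := by ring
  have hQl1 : (∫ t in (0:ℝ)..1, |Q t|) ≤ (N:ℝ) * M := by
    have h1 : (∫ t in (0:ℝ)..1, |Q t|)^2 ≤ ((N:ℝ)*M)^2 := by
      calc (∫ t in (0:ℝ)..1, |Q t|)^2 ≤ ∫ x in Ioc (0:ℝ) 1, Q x ^2 := hCS
        _ = ∑ k ∈ Finset.Icc 1 N, (d k * Real.sqrt k * ε k)^2 := hQQ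
        _ ≤ ((N:ℝ)*M)^2 := hbound2
    have hNM : 0 < (N:ℝ)*M := by positivity
    nlinarith [h1, hI0, hNM]
  -- final assembly
  rw [ge_iff_le, habs, hIocP, hDN]
  have hq2 : (1/(N:ℝ)) * (∫ t in (A 0)..(A (N-1)), |Q t|) ≤ (1/(N:ℝ)) * ((N:ℝ)*M) :=
    mul_le_mul_of_nonneg_left (hQmono.trans hQl1) (by positivity)
  have hNM' : (1/(N:ℝ)) * ((N:ℝ)*M) = M := by field_simp
  linarith [hP_lower, hPmono, hMpos, hq2]
end
end
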